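/- With notation as in the previous statement, the set Z = {z ∈ F_{q^{mr}} : Tr_{F_{q^{mr}}/F_q}(λ z^{e+1}) = 0} is the root set in F_{q^{mr}} of a nonzero polynomial Q(x) = λ x^{R_0} + λ^q x^{R_1} + ⋯ + λ^{q^{mr-1}} x^{R_{mr-1}} whose exponents R_i < q^{mr} are pairwise distinct sums of m distinct powers of q; in particular |Z| < q^{mr}. -/

import Mathlib

open Polynomial

lemma frob_trace_aux (F K : Type*) [Field F] [Fintype F] [Field K] [Fintype K] [Algebra F K]
    (x : K) :
    algebraMap F K (Algebra.trace F K x) =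
      ∑ i ∈ Finset.range (Module.finrank F K), x ^ (Fintype.card F) ^ i := by
  set q := Fintype.card F with hq
  set n := Module.finrank F K with hn
  have hq2 : 2 ≤ q := Fintype.one_lt_card
  obtain ⟨p, hpc⟩ := CharP.exists F
  have hpp : p.Prime := CharP.char_is_prime F p
  haveI : Fact p.Prime := ⟨hpp⟩
  haveI : CharP K p := charP_of_injective_algebraMap (algebraMap F K).injective p
  obtain ⟨s, -, hcard⟩ := FiniteField.card F p
  -- Frobenius x ↦ x ^ q as an F-algebra automorphism of K
  have hfrob : ∀ y : K, iterateFrobenius K p s y = y ^ q := by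
    intro y; rw [iterateFrobenius_def, ← hcard]
  let φh : K →ₐ[F] K :=
    { toRingHom := iterateFrobenius K p (s : ℕ),
      commutes' := fun a => by
        show iterateFrobenius K p (s : ℕ) (algebraMap F K a) = algebraMap F K a
        rw [hfrob, ← map_pow, hq, FiniteField.pow_card] }
  have hbij : Function.Bijective φh :=
    (Finite.injective_iff_bijective).mp φh.toRingHom.injective
  let φ : K ≃ₐ[F] K := AlgEquiv.ofBijective φh hbij
  have hφ : ∀ y : K, φ y = y ^ q := hfrob
  have hφpow : ∀ (i : ℕ) (y : K), (φ ^ i) y = y ^ q ^ i := by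
    intro i
    induction i with
    | zero => intro y; simp
    | succ i ih =>
      intro y
      rw [pow_succ, AlgEquiv.mul_apply, hφ, ih, ← pow_mul, ← pow_succ']
  -- distinctness of the powers of φ
  have hcardK : Fintype.card K = q ^ n := Module.card_eq_pow_finrank
  obtain ⟨g, hg⟩ := IsCyclic.exists_generator (α := Kˣ)
  have horder : orderOf g = q ^ n - 1 := by
    rw [orderOf_eq_card_of_forall_mem_zpowers hg, Nat.card_units, Nat.card_eq_fintype_card,
      hcardK]
  have key : ∀ i j, i ≤ j → j < n → φ ^ i = φ ^ j → i = j := by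
    intro i j hij hjn hphi
    by_contra hne
    have hlt : i < j := lt_of_le_of_ne hij hne
    have h1 : (g : K) ^ q ^ i = (g : K) ^ q ^ j := by
      rw [← hφpow i, ← hφpow j, hphi]
    have h2 : g ^ q ^ i = g ^ q ^ j :=
      Units.ext (by rw [Units.val_pow_eq_pow_val, Units.val_pow_eq_pow_val]; exact h1)
    rw [pow_eq_pow_iff_modEq, horder] at h2
    have hle : q ^ i ≤ q ^ j := Nat.pow_le_pow_right (by omega) hij
    have hdvd : q ^ n - 1 ∣ q ^ j - q ^ i := (Nat.modEq_iff_dvd' hle).mp h2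
    have hpos : 0 < q ^ j - q ^ i := by
      have := Nat.pow_lt_pow_right (by omega : 1 < q) hlt
      omega
    have hjlt : q ^ j < q ^ n := Nat.pow_lt_pow_right (by omega) hjn
    have h1n : (1:ℕ) ≤ q ^ i := Nat.one_le_pow _ _ (by omega)
    have := Nat.le_of_dvd hpos hdvd
    omega
  -- the powers of φ enumerate all automorphisms
  haveI : FiniteDimensional F K := Module.Finite.of_finite
  have hgal : Fintype.card (K ≃ₐ[F] K) = n := Nat.card_eq_fintype_card.symm.trans (IsGalois.card_aut_eq_finrank F K)
  have hbij2 : Function.Bijective (fun i : Fin n => φ ^ (i : ℕ)) := by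
    rw [Fintype.bijective_iff_injective_and_card, hgal, Fintype.card_fin]
    refine ⟨fun i j hij => ?_, rfl⟩
    rcases le_total (i : ℕ) (j : ℕ) with h | h
    · exact Fin.ext (key i j h j.isLt hij)
    · exact Fin.ext (key j i h i.isLt hij.symm).symm
  rw [trace_eq_sum_automorphisms]
  rw [Finset.sum_range]
  exact (Fintype.sum_bijective _ hbij2 (fun i : Fin n => x ^ q ^ (i : ℕ))
    (fun σ => σ x) (fun i => (hφpow i x).symm)).symm

lemma pow_pow_mod_aux (K : Type*) [Field K] [Fintype K] (q n : ℕ)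
    (hcard : Fintype.card K = q ^ n) (z : K) (k : ℕ) :
    z ^ q ^ k = z ^ q ^ (k % n) := by
  conv_lhs => rw [← Nat.div_add_mod k n]
  rw [pow_add, pow_mul]
  congr 1
  rw [pow_mul q n (k / n), ← hcard, FiniteField.pow_card_pow]

/-- The set `Z = {z ∈ F_{q^{mr}} : Tr(λ z^{e+1}) = 0}` is the root set of the
nonzero polynomial `Q = Σ_i λ^{q^i} x^{R_i}` whose pairwise distinct exponents
`R_i < q^{mr}` are sums of `m` distinct powers of `q`; hence `|Z| < q^{mr}`. -/
theorem stmt7 (F E K : Type*) [Field F] [Fintype F] [Field E] [Fintype E]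
    [Field K] [Fintype K] [Algebra F E] [Algebra E K] [Algebra F K]
    [IsScalarTower F E K]
    (q m r : ℕ) (hq : Fintype.card F = q) (hE : Fintype.card E = q ^ m)
    (hK : Fintype.card K = q ^ (m * r)) (hm : 2 ≤ m) (hr : 2 ≤ r)
    (e : ℕ) (he : e = ∑ i ∈ Finset.Ico 1 m, q ^ i)
    (lam : E) (hlam : lam ≠ 0)
    (R : ℕ → ℕ) (hR : ∀ i, R i = ∑ j ∈ Finset.range m, q ^ ((i + j) % (m * r))) :
    (∀ i < m * r, ∀ j < m * r, R i = R j → i = j) ∧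
    (∀ i < m * r, R i < q ^ (m * r)) ∧
    (let Q : K[X] := ∑ i ∈ Finset.range (m * r),
        Polynomial.C ((algebraMap E K lam) ^ q ^ i) * Polynomial.X ^ R i
     Q ≠ 0 ∧
     (∀ z : K, Algebra.trace F K (algebraMap E K lam * z ^ (e + 1)) = 0 ↔
        Q.eval z = 0)) ∧
    Nat.card {z : K | Algebra.trace F K (algebraMap E K lam * z ^ (e + 1)) = 0}
      < q ^ (m * r) := by
  classical
  have hq2 : 2 ≤ q := hq ▸ Fintype.one_lt_card
  set n := m * r with hn
  have h2m : m * 2 ≤ n := Nat.mul_le_mul_left m hr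
  have hmn : m ≤ n := by omega
  have hn0 : 0 < n := by omega
  set lam' : K := algebraMap E K lam with hlam'
  have hlam'0 : lam' ≠ 0 := by
    simpa [hlam'] using (map_ne_zero_iff (algebraMap E K) (algebraMap E K).injective).mpr hlam
  set S : ℕ → Finset ℕ := fun i => (Finset.range m).image (fun j => (i + j) % n) with hS
  have hSsum : ∀ i, ∑ k ∈ S i, q ^ k = R i := by
    intro i
    rw [hR, hS]
    apply Finset.sum_image
    intro a ha b hb hab
    have ha' : a < m := Finset.mem_range.mp ha
    have hb' : b < m := Finset.mem_range.mp hb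
    have : a % n = b % n := Nat.ModEq.add_left_cancel' i hab
    rwa [Nat.mod_eq_of_lt (by omega), Nat.mod_eq_of_lt (by omega)] at this
  -- part 1 : injectivity of R
  have part1 : ∀ i < n, ∀ j < n, R i = R j → i = j := by
    intro i hi j hj hRij
    have hSS : S i = S j := by
      apply Finset.geomSum_injective hq2
      simp only [hSsum, hRij]
    have hiSj : i ∈ S j := by
      rw [← hSS, hS]
      exact Finset.mem_image.mpr ⟨0, Finset.mem_range.mpr (by omega),
        by simp [Nat.mod_eq_of_lt hi]⟩
    have hjSi : j ∈ S i := by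
      rw [hSS, hS]
      exact Finset.mem_image.mpr ⟨0, Finset.mem_range.mpr (by omega),
        by simp [Nat.mod_eq_of_lt hj]⟩
    obtain ⟨a, ha, haa⟩ := Finset.mem_image.mp hiSj
    obtain ⟨b, hb, hbb⟩ := Finset.mem_image.mp hjSi
    have ha' : a < m := Finset.mem_range.mp ha
    have hb' : b < m := Finset.mem_range.mp hb
    -- j = (j + (a+b)) % n
    have hjj : (j + (a + b)) % n = j % n := by
      have : (j + (a + b)) % n = ((j + a) % n + b) % n := by
        rw [Nat.mod_add_mod]; ring_nf
      rw [this, haa, hbb, Nat.mod_eq_of_lt hj]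
    have hdvd : n ∣ a + b := by
      have := (Nat.modEq_iff_dvd' (Nat.le_add_right j (a + b))).mp hjj.symm
      simpa using this
    have hab0 : a + b = 0 := Nat.eq_zero_of_dvd_of_lt hdvd (by omega) |>.symm ▸ rfl
    have : a = 0 := by omega
    rw [this, add_zero] at haa
    rw [Nat.mod_eq_of_lt hj] at haa
    omega
  -- part 2 : R i < q ^ n
  have part2 : ∀ i < n, R i < q ^ n := by
    intro i _
    rw [← hSsum i]
    apply Nat.geomSum_lt hq2
    intro k hk
    obtain ⟨j, _, hj⟩ := Finset.mem_image.mp hk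
    rw [← hj]
    exact Nat.mod_lt _ hn0
  -- the polynomial
  set Q : K[X] := ∑ i ∈ Finset.range n,
      Polynomial.C (lam' ^ q ^ i) * Polynomial.X ^ R i with hQ
  have hQne : Q ≠ 0 := by
    intro h0
    have hc : Q.coeff (R 0) = lam' := by
      rw [hQ, Polynomial.finset_sum_coeff]
      have : ∀ i ∈ Finset.range n,
          (Polynomial.C (lam' ^ q ^ i) * Polynomial.X ^ R i).coeff (R 0) =
            if R 0 = R i then lam' ^ q ^ i else 0 := by
        intro i _
        rw [Polynomial.coeff_C_mul, Polynomial.coeff_X_pow]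
        simp [mul_ite]
      rw [Finset.sum_congr rfl this]
      rw [Finset.sum_eq_single_of_mem 0 (Finset.mem_range.mpr hn0)]
      · simp
      · intro i hi hi0
        rw [if_neg]
        intro hRR
        exact hi0 (part1 i (Finset.mem_range.mp hi) 0 hn0 hRR.symm)
    rw [h0] at hc
    simp at hc
    exact hlam'0 hc.symm
  -- evaluation
  have heval : ∀ z : K, Q.eval z = ∑ i ∈ Finset.range n, lam' ^ q ^ i * z ^ R i := by
    intro z
    rw [hQ, Polynomial.eval_finset_sum]
    simp
  -- finrank
  have hfr : Module.finrank F K = n := by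
    have hc : Fintype.card K = q ^ Module.finrank F K := by
      have := Module.card_eq_pow_finrank (K := F) (V := K)
      rwa [hq] at this
    rw [hK] at hc
    exact (Nat.pow_right_injective hq2 hc.symm)
  -- exponent computation
  have hpowR : ∀ (z : K) (i : ℕ), (lam' * z ^ (e + 1)) ^ q ^ i = lam' ^ q ^ i * z ^ R i := by
    intro z i
    rw [mul_pow, ← pow_mul]
    congr 1
    have he1 : e + 1 = ∑ j ∈ Finset.range m, q ^ j := by
      rw [he, Finset.range_eq_Ico, Finset.sum_eq_sum_Ico_succ_bot (by omega : 0 < m)]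
      ring
    rw [he1, Finset.sum_mul, ← Finset.prod_pow_eq_pow_sum, hR i, ← Finset.prod_pow_eq_pow_sum]
    apply Finset.prod_congr rfl
    intro j _
    rw [← pow_add, pow_pow_mod_aux K q n hK z (j + i), Nat.add_comm j i]
  have htr : ∀ z : K,
      Algebra.trace F K (lam' * z ^ (e + 1)) = 0 ↔ Q.eval z = 0 := by
    intro z
    have h1 := frob_trace_aux F K (lam' * z ^ (e + 1))
    rw [hfr, hq] at h1
    rw [heval z]
    constructor
    · intro h
      rw [h, map_zero] at h1
      rw [← Finset.sum_congr rfl (fun i _ => hpowR z i), ← h1]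
    · intro h
      apply (map_eq_zero_iff (algebraMap F K) (algebraMap F K).injective).mp
      rw [h1, Finset.sum_congr rfl (fun i _ => hpowR z i), h]
  -- part 4 : cardinality bound
  have hdeg : Q.natDegree < q ^ n := by
    have hb : Q.natDegree ≤ q ^ n - 1 := by
      rw [hQ]
      apply Polynomial.natDegree_sum_le_of_forall_le
      intro i hi
      refine (Polynomial.natDegree_C_mul_X_pow_le _ _).trans ?_
      have := part2 i (Finset.mem_range.mp hi)
      omega
    have : 0 < q ^ n := Nat.pow_pos (by omega)
    omega
  have hseteq : {z : K | Algebra.trace F K (lam' * z ^ (e + 1)) = 0}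
      = ↑(Q.roots.toFinset) := by
    ext z
    simp only [Set.mem_setOf_eq, Finset.coe_sort_coe, Multiset.mem_toFinset,
      Finset.mem_coe, Polynomial.mem_roots hQne, Polynomial.IsRoot.def]
    exact htr z
  have part4 : Nat.card {z : K | Algebra.trace F K (lam' * z ^ (e + 1)) = 0} < q ^ n := by
    rw [Nat.card_coe_set_eq, hseteq, Set.ncard_coe_finset]
    calc Q.roots.toFinset.card ≤ Multiset.card Q.roots := Q.roots.toFinset_card_le
      _ ≤ Q.natDegree := Polynomial.card_roots' Q
      _ < q ^ n := hdeg
  exact ⟨part1, part2, ⟨hQne, htr⟩, part4⟩
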